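/- arXiv:math/9907001 — 3 statements merged into one kernel-verified Lean document; each statement's English description precedes it below -/
import Mathlib

section
/- Let r >= 1 be an integer, sigma an even integer, t >= 1, and for i = 1, ..., t let l_i >= 1 and a_i be integers. Set s_i = l_i*(l_i*sigma - 2*r*a_i), l = l_1 + ... + l_t, a = a_1 + ... + a_t, S = l*(l*sigma - 2*r*a), and k = l - max_i l_i. Assume s_i >= -2 for every i and s_{i0} >= 0 for some index i0. Then, as rational numbers, the sum over all pairs i < j of (l_i*l_j*sigma - r*(l_i*a_j + l_j*a_i)) is at least k*S/(2*l) - (l - 1 - k)*k. -/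
/-- Arithmetic estimate from the proof of [Y5, Lem. 4.4]: with
`sᵢ = lᵢ(lᵢσ - 2raᵢ)`, `l = ∑lᵢ`, `a = ∑aᵢ`, `S = l(lσ - 2ra)` and
`k = l - maxᵢ lᵢ`, if all `sᵢ ≥ -2` and some `s_{i₀} ≥ 0`, then
`∑_{i<j} (lᵢlⱼσ - r(lᵢaⱼ + lⱼaᵢ)) ≥ kS/(2l) - (l-1-k)k` as rational numbers. -/
theorem stmt_7 (r σ : ℤ) (hr : 1 ≤ r) (hσ : Even σ)
    (t : ℕ) (ht : 1 ≤ t) (l a : ℕ → ℤ)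
    (hl : ∀ i < t, 1 ≤ l i)
    (hs : ∀ i < t, l i * (l i * σ - 2 * r * a i) ≥ -2)
    (hs0 : ∃ i < t, l i * (l i * σ - 2 * r * a i) ≥ 0)
    (lsum asum S k : ℤ)
    (hlsum : lsum = ∑ i ∈ Finset.range t, l i)
    (hasum : asum = ∑ i ∈ Finset.range t, a i)
    (hS : S = lsum * (lsum * σ - 2 * r * asum))
    (hk : k = lsum -
      (Finset.range t).sup' (Finset.nonempty_range_iff.mpr (by omega)) l) :
    ((∑ p ∈ (Finset.range t ×ˢ Finset.range t).filter (fun p => p.1 < p.2),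
        (l p.1 * l p.2 * σ - r * (l p.1 * a p.2 + l p.2 * a p.1)) : ℤ) : ℚ)
      ≥ (k : ℚ) * S / (2 * lsum) - ((lsum : ℚ) - 1 - k) * k := by
  obtain ⟨τ, hτ⟩ := hσ
  set c : ℕ → ℤ := fun i => l i * τ - r * a i with hc
  set C : ℤ := ∑ i ∈ Finset.range t, c i with hC
  set G : ℕ × ℕ → ℤ := fun p => l p.1 * l p.2 * σ - r * (l p.1 * a p.2 + l p.2 * a p.1)
    with hG
  set P := Finset.range t ×ˢ Finset.range t with hP
  set T : ℤ := ∑ p ∈ P.filter (fun p => p.1 < p.2), G p with hT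
  -- basic sum identities
  have e1 : ∑ x ∈ Finset.range t, (l x * σ - r * a x) = lsum * σ - r * asum := by
    rw [hlsum, hasum, Finset.sum_mul, Finset.mul_sum, ← Finset.sum_sub_distrib]
  have e2 : ∑ x ∈ Finset.range t, r * l x = r * lsum := by
    rw [hlsum, Finset.mul_sum]
  have hbC : lsum * σ - 2 * r * asum = 2 * C := by
    rw [hC, hlsum, hasum, Finset.sum_mul, Finset.mul_sum, Finset.mul_sum,
      ← Finset.sum_sub_distrib]
    exact Finset.sum_congr rfl fun i _ => by simp only [hc]; rw [hτ]; ring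
  -- full product sum
  have hA : ∑ p ∈ P, G p = lsum * (lsum * σ - 2 * r * asum) := by
    rw [hP, Finset.sum_product]
    have inner : ∀ i, ∑ j ∈ Finset.range t, G (i, j)
        = (l i * σ - r * a i) * lsum - (r * l i) * asum := by
      intro i
      rw [hlsum, hasum, Finset.mul_sum, Finset.mul_sum, ← Finset.sum_sub_distrib]
      exact Finset.sum_congr rfl fun j _ => by simp only [hG]; ring
    rw [Finset.sum_congr rfl fun i _ => inner i, Finset.sum_sub_distrib,
      ← Finset.sum_mul, ← Finset.sum_mul, e1, e2]
    ring
  -- symmetry of the two off-diagonal halves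
  have hswap : ∑ p ∈ P.filter (fun p => p.2 < p.1), G p = T := by
    rw [hT]
    apply Finset.sum_equiv (Equiv.prodComm ℕ ℕ)
    · intro p
      simp only [hP, Finset.mem_filter, Finset.mem_product, Equiv.prodComm_apply,
        Prod.fst_swap, Prod.snd_swap]
      tauto
    · intro p _
      simp only [hG, Equiv.prodComm_apply, Prod.fst_swap, Prod.snd_swap]
      ring
  -- three-way split of the product sum
  have hsplit : ∑ p ∈ P, G p
      = T + (∑ p ∈ P.filter (fun p => p.2 < p.1), G p
          + ∑ p ∈ P.filter (fun p => p.1 = p.2), G p) := by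
    rw [hT, ← Finset.sum_filter_add_sum_filter_not P (fun p => p.1 < p.2) G]
    congr 1
    rw [← Finset.sum_filter_add_sum_filter_not (P.filter (fun p => ¬ p.1 < p.2))
      (fun p => p.2 < p.1) G, Finset.filter_filter, Finset.filter_filter]
    congr 2
    · exact Finset.filter_congr fun p _ => by simp; omega
    · exact Finset.filter_congr fun p _ => by simp; omega
  -- diagonal sum
  have hdiag : ∑ p ∈ P.filter (fun p => p.1 = p.2), G p
      = 2 * ∑ i ∈ Finset.range t, l i * c i := by
    have hd : P.filter (fun p => p.1 = p.2) = (Finset.range t).diag := by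
      ext ⟨x, y⟩
      rw [Finset.mem_diag, hP, Finset.mem_filter, Finset.mem_product]
      constructor <;> rintro ⟨h1, h2⟩ <;> simp_all
    rw [hd, Finset.sum_diag, Finset.mul_sum]
    exact Finset.sum_congr rfl fun i _ => by simp only [hG, hc]; rw [hτ]; ring
  -- T in closed form
  have hTval : T = lsum * C - ∑ i ∈ Finset.range t, l i * c i := by
    have h2 := hsplit
    rw [hA, hswap, hdiag, hbC] at h2
    linarith
  -- the max
  have H : (Finset.range t).Nonempty := Finset.nonempty_range_iff.mpr (by omega)
  obtain ⟨imax, himax, hmeq⟩ := Finset.exists_mem_eq_sup' H l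
  set m : ℤ := l imax with hm
  have hk' : k = lsum - m := by
    rw [hk]; exact congrArg (fun x => lsum - x) hmeq
  have hle : ∀ i ∈ Finset.range t, l i ≤ m :=
    fun i hi => (Finset.le_sup' l hi).trans (le_of_eq hmeq)
  have hm1 : 1 ≤ m := hl imax (Finset.mem_range.mp himax)
  -- lsum - m ≥ t - 1
  have herasesum : ∑ i ∈ (Finset.range t).erase imax, l i = lsum - m := by
    rw [hlsum, ← Finset.add_sum_erase _ l himax, hm]; ring
  have hlm : (t : ℤ) - 1 ≤ lsum - m := by
    rw [← herasesum]
    have h1 : ∑ i ∈ (Finset.range t).erase imax, (1:ℤ)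
        ≤ ∑ i ∈ (Finset.range t).erase imax, l i :=
      Finset.sum_le_sum fun i hi =>
        hl i (Finset.mem_range.mp (Finset.mem_of_mem_erase hi))
    rw [Finset.sum_const, Finset.card_erase_of_mem himax, Finset.card_range] at h1
    have : (((t - 1 : ℕ)) • (1:ℤ)) = (t:ℤ) - 1 := by
      simp [nsmul_eq_mul]; push_cast [Nat.cast_sub ht]; ring
    linarith [this ▸ h1]
  -- c i ≥ -1
  have hc1 : ∀ i ∈ Finset.range t, -1 ≤ c i := by
    intro i hi
    have hi' := Finset.mem_range.mp hi
    have h1 := hs i hi'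
    have h2 := hl i hi'
    have hlc : -1 ≤ l i * c i := by
      have he : l i * (l i * σ - 2 * r * a i) = 2 * (l i * c i) := by
        simp only [hc]; rw [hτ]; ring
      omega
    rcases le_or_gt 0 (c i) with h | h
    · linarith
    · have h4 : l i * c i ≤ 1 * c i := mul_le_mul_of_nonpos_right h2 (le_of_lt h)
      linarith
  -- the special index
  obtain ⟨i0, hi0t, hsi0⟩ := hs0
  have hi0 : i0 ∈ Finset.range t := Finset.mem_range.mpr hi0t
  have hc0 : 0 ≤ c i0 := by
    have h2 := hl i0 hi0t
    have hlc : 0 ≤ l i0 * c i0 := by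
      have he : l i0 * (l i0 * σ - 2 * r * a i0) = 2 * (l i0 * c i0) := by
        simp only [hc]; rw [hτ]; ring
      omega
    rcases le_or_gt 0 (c i0) with h | h
    · exact h
    · have h4 : l i0 * c i0 ≤ 1 * c i0 := mul_le_mul_of_nonpos_right h2 (le_of_lt h)
      linarith
  -- main bound
  have hmsum : m * C - ∑ i ∈ Finset.range t, l i * c i
      = ∑ i ∈ Finset.range t, (m - l i) * c i := by
    rw [hC, Finset.mul_sum, ← Finset.sum_sub_distrib]
    exact Finset.sum_congr rfl fun i _ => by ring
  have hbound : -((m - 1) * (lsum - m)) ≤ ∑ i ∈ Finset.range t, (m - l i) * c i := by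
    have hsplit0 : ∑ i ∈ Finset.range t, (m - l i) * c i
        = (m - l i0) * c i0 + ∑ i ∈ (Finset.range t).erase i0, (m - l i) * c i :=
      (Finset.add_sum_erase _ (fun i => (m - l i) * c i) hi0).symm
    have hterm0 : 0 ≤ (m - l i0) * c i0 :=
      mul_nonneg (by linarith [hle i0 hi0]) hc0
    have hrest : ∑ i ∈ (Finset.range t).erase i0, (-(m - l i))
        ≤ ∑ i ∈ (Finset.range t).erase i0, (m - l i) * c i := by
      apply Finset.sum_le_sum
      intro i hi
      have hi' := Finset.mem_of_mem_erase hi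
      have h1 := hc1 i hi'
      have h2 := hle i hi'
      have h3 : (m - l i) * (-1) ≤ (m - l i) * c i :=
        mul_le_mul_of_nonneg_left h1 (by linarith)
      linarith
    have hsum0 : ∑ i ∈ (Finset.range t).erase i0, l i = lsum - l i0 := by
      rw [hlsum, ← Finset.add_sum_erase _ l hi0]; ring
    have hrestval : ∑ i ∈ (Finset.range t).erase i0, (-(m - l i))
        = -(((t:ℤ) - 1) * m - (lsum - l i0)) := by
      rw [Finset.sum_neg_distrib, Finset.sum_sub_distrib, hsum0, Finset.sum_const,
        Finset.card_erase_of_mem hi0, Finset.card_range, nsmul_eq_mul]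
      push_cast [Nat.cast_sub ht]
      ring
    rw [hsplit0]
    rw [hrestval] at hrest
    have hli0 := hle i0 hi0
    have hli0' := hl i0 hi0t
    linarith [mul_nonneg (by linarith : (0:ℤ) ≤ m - 1)
      (by linarith : (0:ℤ) ≤ lsum - m - ((t:ℤ) - 1))]
  -- integer inequality
  have hint : k * C - (lsum - 1 - k) * k ≤ T := by
    rw [hTval, hk']
    linarith [hmsum, hbound]
  -- pass to ℚ
  have hlsum1 : 1 ≤ lsum := by linarith
  have hS2 : S = 2 * lsum * C := by rw [hS, hbC]; ring
  have h0 : (lsum : ℚ) ≠ 0 := Int.cast_ne_zero.mpr (by omega)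
  have hq : (k : ℚ) * S / (2 * lsum) = (k : ℚ) * C := by
    rw [hS2]; push_cast; field_simp
  rw [ge_iff_le, hq]
  have hcast : ((k * C - (lsum - 1 - k) * k : ℤ) : ℚ) ≤ ((T : ℤ) : ℚ) := by
    exact_mod_cast hint
  push_cast at hcast
  linarith
end

section
/- Let r0, l1, l2 be positive integers and a2, n nonnegative integers satisfying: a2*r0 > l2, n*l2 > a2*l1, and (a2 + n)*r0 < 2*(l1 + l2). Then l1*(a2*r0 - 2*l2) + n*((l1 + l2)*r0 - 1) - l1^2 >= 2. -/
/-- Inequality (3.8) in the proof of Lemma 3.1 (Case B): if `r₀, l₁, l₂ > 0`,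
`a₂, n ≥ 0`, `a₂r₀ > l₂`, `nl₂ > a₂l₁` and `(a₂+n)r₀ < 2(l₁+l₂)`, then
`l₁(a₂r₀ - 2l₂) + n((l₁+l₂)r₀ - 1) - l₁² ≥ 2`. -/
theorem stmt_10 (r₀ l₁ l₂ a₂ n : ℤ)
    (hr₀ : 0 < r₀) (hl₁ : 0 < l₁) (hl₂ : 0 < l₂)
    (ha₂ : 0 ≤ a₂) (hn : 0 ≤ n)
    (h1 : a₂ * r₀ > l₂) (h2 : n * l₂ > a₂ * l₁)
    (h3 : (a₂ + n) * r₀ < 2 * (l₁ + l₂)) :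
    l₁ * (a₂ * r₀ - 2 * l₂) + n * ((l₁ + l₂) * r₀ - 1) - l₁ ^ 2 ≥ 2 := by
  have hn1 : 1 ≤ n := by nlinarith
  have ha1 : 1 ≤ a₂ := by nlinarith
  nlinarith [mul_le_mul_of_nonneg_right (by linarith : a₂ * l₁ + 1 ≤ n * l₂) hr₀.le,
    mul_le_mul_of_nonneg_left (by linarith : l₂ + 1 ≤ a₂ * r₀) hl₁.le,
    mul_nonneg (sub_nonneg.2 hn1) (by nlinarith : (0:ℤ) ≤ l₁ * r₀ - 1),
    mul_pos hl₁ hr₀, mul_pos hl₂ hr₀, mul_nonneg (sub_nonneg.2 ha1) hl₁.le]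
end

section
/- Let r, r1, d, d1, l, a, q, s be integers with r > 0, r1 > 0, l > 0, d*r1 - d1*r = 1 and a*r1 + q*l = 1. Set k = r1*(q*r + r1*s) - r^2, and on Z + Z + Z with elements (rk, m, c) define the pairing <(rk, m, c), (rk', m', c')> = 2*k*m*m' - rk*c' - c*rk'. Define v' = (l*r, l*d, l*((1 + d*r1)*d1*s + d^2*q*r1 - r*d^2) + a) and v1 = (r1, d1, r1*(-d^2 + d1^2*s) + d1^2*r*q + 2*d). Then: (i) <v1, v1> = -2; (ii) <v', v'> = 2*l*(l*s - r*a); (iii) <v1, v'> = -1. Moreover, if l*s - r*a >= 0 and r1 > l*r, then k > 0. -/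
/-- The Mukai pairing on `ℤ ⊕ ℤ·H' ⊕ ℤ·ω'` for a polarized K3 surface with
`(H'²) = 2k`: `⟨(rk, m, c), (rk', m', c')⟩ = 2k·m·m' - rk·c' - c·rk'`. -/
def mukaiPairing (k : ℤ) (x y : ℤ × ℤ × ℤ) : ℤ :=
  2 * k * x.2.1 * y.2.1 - x.1 * y.2.2 - x.2.2 * y.1

/-- The construction in Section 2.2.1: with `d·r₁ - d₁·r = 1`,
`a·r₁ + q·l = 1` and `k = r₁(qr + r₁s) - r²`, the vectors
`v' = (lr, ld, l((1 + dr₁)d₁s + d²qr₁ - rd²) + a)` and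
`v₁ = (r₁, d₁, r₁(-d² + d₁²s) + d₁²rq + 2d)` satisfy
`⟨v₁,v₁⟩ = -2`, `⟨v',v'⟩ = 2l(ls - ra)`, `⟨v₁,v'⟩ = -1`; moreover
`k > 0` whenever `ls - ra ≥ 0` and `r₁ > lr`. -/
theorem stmt_12 (r r₁ d d₁ l a q s : ℤ)
    (hr : 0 < r) (hr₁ : 0 < r₁) (hl : 0 < l)
    (h1 : d * r₁ - d₁ * r = 1) (h2 : a * r₁ + q * l = 1)
    (k : ℤ) (hk : k = r₁ * (q * r + r₁ * s) - r ^ 2)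
    (v' v₁ : ℤ × ℤ × ℤ)
    (hv' : v' = (l * r, l * d,
      l * ((1 + d * r₁) * d₁ * s + d ^ 2 * q * r₁ - r * d ^ 2) + a))
    (hv₁ : v₁ = (r₁, d₁, r₁ * (-d ^ 2 + d₁ ^ 2 * s) + d₁ ^ 2 * r * q + 2 * d)) :
    mukaiPairing k v₁ v₁ = -2 ∧
    mukaiPairing k v' v' = 2 * l * (l * s - r * a) ∧
    mukaiPairing k v₁ v' = -1 ∧
    (0 ≤ l * s - r * a → l * r < r₁ → 0 < k) := by
  subst hk hv' hv₁
  refine ⟨?_, ?_, ?_, fun hpos hlt => ?_⟩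
  · simp only [mukaiPairing]
    ring_nf
    linear_combination (2*r₁*d - 2 + 2*r*d₁) * h1
  · simp only [mukaiPairing]
    ring_nf
    linear_combination (2*r₁*d*l*l*s + 2*l*l*s) * h1
  · simp only [mukaiPairing]
    ring_nf
    linear_combination (r*d₁*l*q + r₁*d₁*l*s - r₁*d*l*q + 2*r*d*l - l*q) * h1 - h2
  · have hlk : l * (r₁ * (q * r + r₁ * s) - r ^ 2)
        = r₁ * r + r₁ ^ 2 * (l * s - r * a) + r * (r₁ - l * r) + (a*r₁ + q*l - 1) * r * r₁ - r * r₁ := by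
      ring
    nlinarith [mul_pos hr (by linarith : (0:ℤ) < r₁ - l * r),
      mul_nonneg (mul_nonneg hr₁.le hr₁.le) hpos, hlk, h2, mul_pos hr hr₁]
end
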